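/- Let T : Ω̄ → X map bounded sets into relatively compact sets, and let 𝕋 be its closed-convex envelope. Then 𝕋 is upper semicontinuous: for any sequence x_n → x in Ω̄ and y_n ∈ 𝕋x_n with y_n → y, we have y ∈ 𝕋x. -/

import Mathlib

open Set Metric Filter

/-- The closed-convex envelope of `T` relative to the set `Ω`. -/
def ccEnvelope {X : Type*} [NormedAddCommGroup X] [NormedSpace ℝ X]
    (Ω : Set X) (T : X → X) (x : X) : Set X :=
  ⋂ ε > (0 : ℝ), closure (convexHull ℝ (T '' (closedBall x ε ∩ Ω)))

theorem stmt3 {X : Type*} [NormedAddCommGroup X] [NormedSpace ℝ X] [CompleteSpace X]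
    (Ω : Set X) (hΩ : Ω.Nonempty) (T : X → X)
    (hT : ∀ B ⊆ Ω, Bornology.IsBounded B → IsCompact (closure (T '' B)))
    (x : X) (hx : x ∈ Ω) (u : ℕ → X) (hu : ∀ n, u n ∈ Ω)
    (hux : Tendsto u atTop (nhds x))
    (y : X) (v : ℕ → X) (hv : ∀ n, v n ∈ ccEnvelope Ω T (u n))
    (hvy : Tendsto v atTop (nhds y)) :
    y ∈ ccEnvelope Ω T x := by
  rw [ccEnvelope]
  simp only [mem_iInter]
  intro ε hε
  refine isClosed_closure.mem_of_tendsto hvy ?_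
  obtain ⟨N, hN⟩ := Metric.tendsto_atTop.mp hux (ε / 2) (half_pos hε)
  filter_upwards [eventually_ge_atTop N] with n hn
  have hsub : closedBall (u n) (ε / 2) ⊆ closedBall x ε := by
    intro z hz
    rw [mem_closedBall] at *
    calc dist z x ≤ dist z (u n) + dist (u n) x := dist_triangle _ _ _
      _ ≤ ε / 2 + ε / 2 := add_le_add hz (hN n hn).le
      _ = ε := by ring
  have := hv n
  rw [ccEnvelope] at this
  simp only [mem_iInter] at this
  exact closure_mono (convexHull_mono (image_mono (inter_subset_inter_left _ hsub)))
    (this (ε / 2) (half_pos hε))
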